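/- If G is a highly symmetric graph in which every vertex is resistance regular, then G is regular. -/

import Mathlib

open Finset Matrix Polynomial

/-- The transition matrix of the simple random walk on a graph:
`P i j = 1/deg(i)` if `i ~ j`, and `0` otherwise. -/
noncomputable def transMatrix {V : Type*} [Fintype V] (G : SimpleGraph V)
    [DecidableRel G.Adj] : Matrix V V ℝ :=
  fun i j => if G.Adj i j then (1 : ℝ) / (G.degree i) else 0

/-- The stationary distribution of the simple random walk: `π i = deg(i) / (2|E|)`. -/
noncomputable def stationary {V : Type*} [Fintype V] [DecidableEq V] (G : SimpleGraph V)
    [DecidableRel G.Adj] : V → ℝ :=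
  fun i => (G.degree i : ℝ) / (2 * G.edgeFinset.card)

/-- `H` is the table of expected hitting times of the simple random walk on `G`:
`H a b = E_a T_b`.  It is characterized by `H b b = 0` and the one-step
(first-step analysis) equations `H a b = 1 + ∑_j P a j * H j b` for `a ≠ b`. -/
def IsHittingTime {V : Type*} [Fintype V] (G : SimpleGraph V) [DecidableRel G.Adj]
    (H : V → V → ℝ) : Prop :=
  (∀ b, H b b = 0) ∧ ∀ a b, a ≠ b → H a b = 1 + ∑ j, transMatrix G a j * H j b

/-- `R` is the table of effective resistances of `G` (unit resistor on each edge):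
`R a b = v a - v b` where `v` is a potential for a unit current flow from `a` to `b`,
i.e. `L v = 1_a - 1_b` for the graph Laplacian `L`. -/
def IsEffectiveResistance {V : Type*} [Fintype V] [DecidableEq V] (G : SimpleGraph V)
    [DecidableRel G.Adj] (R : V → V → ℝ) : Prop :=
  ∀ a b, ∃ v : V → ℝ,
    G.lapMatrix ℝ *ᵥ v =
      (fun x => (if x = a then (1 : ℝ) else 0) - (if x = b then (1 : ℝ) else 0)) ∧
    R a b = v a - v b

/-- If `G` is a highly symmetric graph in which every vertex is resistance
regular (`R_{ij} = R_{ik}` for all neighbors `j, k` of `i`), then `G` is regular. -/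
theorem HS_resistance_regular_implies_regular {V : Type*} [Fintype V] [DecidableEq V]
    (G : SimpleGraph V) [DecidableRel G.Adj] (hconn : G.Connected)
    (H : V → V → ℝ) (hH : IsHittingTime G H) (hHS : ∀ a b, H a b = H b a)
    (R : V → V → ℝ) (hR : IsEffectiveResistance G R)
    (hrr : ∀ i j k, G.Adj i j → G.Adj i k → R i j = R i k) :
    ∃ d, G.IsRegularOfDegree d := by
  classical
  by_cases hE : ∃ x y, G.Adj x y
  swap
  · -- no edges: every degree is 0
    refine ⟨0, fun v => Nat.eq_zero_of_not_pos fun hp => ?_⟩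
    obtain ⟨w, hw⟩ := (G.degree_pos_iff_exists_adj v).mp hp
    exact hE ⟨v, w, hw⟩
  obtain ⟨x₀, y₀, hxy₀⟩ := hE
  -- every vertex has positive degree
  have hdegpos : ∀ a : V, 0 < G.degree a := by
    intro a
    rcases eq_or_ne a x₀ with rfl | hax
    · exact (G.degree_pos_iff_exists_adj a).mpr ⟨y₀, hxy₀⟩
    · obtain ⟨w⟩ := hconn a x₀
      cases w with
      | nil => exact absurd rfl hax
      | cons h p => exact (G.degree_pos_iff_exists_adj a).mpr ⟨_, h⟩
  set tm : ℝ := ∑ v : V, (G.degree v : ℝ) with htm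
  have htmpos : 0 < tm := by
    have : (0:ℝ) < (G.degree x₀ : ℝ) := by exact_mod_cast hdegpos x₀
    refine lt_of_lt_of_le this ?_
    exact Finset.single_le_sum (f := fun v : V => (G.degree v : ℝ))
      (fun i _ => by positivity) (Finset.mem_univ x₀)
  -- Step 1: the Laplacian applied to a hitting-time column
  have keylap : ∀ b : V, G.lapMatrix ℝ *ᵥ (fun a => H a b) =
      fun x => (G.degree x : ℝ) - if x = b then tm else 0 := by
    intro b
    have h1 : ∀ a : V, a ≠ b →
        (G.lapMatrix ℝ *ᵥ (fun a => H a b)) a = (G.degree a : ℝ) := by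
      intro a ha
      rw [SimpleGraph.lapMatrix_mulVec_apply]
      have hd : (0:ℝ) < (G.degree a : ℝ) := by exact_mod_cast hdegpos a
      have hsum : ∑ j, transMatrix G a j * H j b =
          (∑ u ∈ G.neighborFinset a, H u b) / (G.degree a : ℝ) := by
        rw [SimpleGraph.neighborFinset_eq_filter, Finset.sum_filter, Finset.sum_div]
        refine Finset.sum_congr rfl fun j _ => ?_
        simp only [transMatrix]
        split_ifs with h
        · ring
        · simp
      have heq := hH.2 a b ha
      rw [hsum] at heq
      rw [heq]
      field_simp
      ring
    have hzero : ∑ x, (G.lapMatrix ℝ *ᵥ (fun a => H a b)) x = 0 := by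
      have hcol : (fun _ : V => (1:ℝ)) ᵥ* G.lapMatrix ℝ = 0 := by
        have hsymm : (G.lapMatrix ℝ)ᵀ = G.lapMatrix ℝ := (G.isSymm_lapMatrix ℝ).eq
        calc (fun _ : V => (1:ℝ)) ᵥ* G.lapMatrix ℝ
            = G.lapMatrix ℝ *ᵥ (fun _ => (1:ℝ)) := by
              conv_lhs => rw [← hsymm]
              rw [Matrix.vecMul_transpose]
          _ = 0 := G.lapMatrix_mulVec_const_eq_zero
      have := Matrix.dotProduct_mulVec (fun _ : V => (1:ℝ)) (G.lapMatrix ℝ)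
        (fun a => H a b)
      rw [hcol] at this
      simpa [dotProduct] using this
    have hb : (G.lapMatrix ℝ *ᵥ (fun a => H a b)) b = (G.degree b : ℝ) - tm := by
      rw [← Finset.add_sum_erase _ _ (Finset.mem_univ b)] at hzero
      have h2 : ∑ x ∈ Finset.univ.erase b, (G.lapMatrix ℝ *ᵥ (fun a => H a b)) x
          = ∑ x ∈ Finset.univ.erase b, (G.degree x : ℝ) := by
        refine Finset.sum_congr rfl fun x hx => h1 x (Finset.ne_of_mem_erase hx)
      have h3 : ∑ x ∈ Finset.univ.erase b, (G.degree x : ℝ) = tm - (G.degree b : ℝ) :=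
        Finset.sum_erase_eq_sub (Finset.mem_univ b)
      rw [h2, h3] at hzero
      linarith
    ext x
    rcases eq_or_ne x b with rfl | hx
    · simpa using hb
    · rw [h1 x hx, if_neg hx, sub_zero]
  -- Step 2: commute-time identity
  have commute : ∀ a b : V, H a b + H b a = tm * R a b := by
    intro a b
    obtain ⟨v, hv, hRab⟩ := hR a b
    set w : V → ℝ := fun x => H x b - H x a - tm * v x with hw
    have hlw : G.lapMatrix ℝ *ᵥ w = 0 := by
      have : w = (fun x => H x b) - (fun x => H x a) - tm • v := by
        funext x; simp [hw, Pi.sub_apply]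
      rw [this, Matrix.mulVec_sub, Matrix.mulVec_sub, Matrix.mulVec_smul,
        keylap b, keylap a, hv]
      funext x
      simp only [Pi.sub_apply, Pi.smul_apply, smul_eq_mul, Pi.zero_apply]
      split_ifs <;> ring
    have hconst := (G.lapMatrix_mulVec_eq_zero_iff_forall_reachable (x := w)).mp
      hlw a b (hconn a b)
    simp only [hw] at hconst
    rw [hRab]
    linear_combination hconst + hH.1 a + hH.1 b
  -- Step 3: return-time sum
  have hret : ∀ b : V, ∑ u ∈ G.neighborFinset b, H u b = tm - (G.degree b : ℝ) := by
    intro b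
    have := congrFun (keylap b) b
    rw [SimpleGraph.lapMatrix_mulVec_apply, if_pos rfl, hH.1 b] at this
    linarith
  -- R is symmetric
  have hRsymm : ∀ a b : V, R a b = R b a := by
    intro a b
    have h1 := commute a b
    have h2 := commute b a
    have : tm * R a b = tm * R b a := by linarith
    exact mul_left_cancel₀ (ne_of_gt htmpos) this
  -- For adjacent i j : H j i = (tm/2) * R i j
  have hHadj : ∀ i j : V, G.Adj i j → H j i = tm / 2 * R i j := by
    intro i j hij
    have h1 := commute i j
    rw [hHS i j] at h1
    have h2 : H j i = tm * R i j / 2 := by linarith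
    rw [h2]; ring
  -- degree formula: deg i * (tm/2 * R i j + 1) = tm for any neighbor j of i
  have hdegf : ∀ i j : V, G.Adj i j →
      (G.degree i : ℝ) * (tm / 2 * R i j + 1) = tm := by
    intro i j hij
    have hsum : ∑ u ∈ G.neighborFinset i, H u i
        = (G.degree i : ℝ) * (tm / 2 * R i j) := by
      have hcongr : ∀ u ∈ G.neighborFinset i, H u i = tm / 2 * R i j := by
        intro u hu
        rw [SimpleGraph.mem_neighborFinset] at hu
        rw [hHadj i u hu, hrr i u j hu hij]
      rw [Finset.sum_congr rfl hcongr, Finset.sum_const,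
        SimpleGraph.card_neighborFinset_eq_degree, nsmul_eq_mul]
    have := hret i
    rw [hsum] at this
    linarith
  -- adjacent vertices have equal degree
  have hadjdeg : ∀ i j : V, G.Adj i j → G.degree i = G.degree j := by
    intro i j hij
    have h1 := hdegf i j hij
    have h2 := hdegf j i hij.symm
    rw [hRsymm j i] at h2
    have hfpos : 0 < tm / 2 * R i j + 1 := by
      have hdi : (0:ℝ) < (G.degree i : ℝ) := by exact_mod_cast hdegpos i
      by_contra hle
      push_neg at hle
      nlinarith
    have : (G.degree i : ℝ) = (G.degree j : ℝ) := by
      have := mul_right_cancel₀ (ne_of_gt hfpos) (h1.trans h2.symm)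
      exact this
    exact_mod_cast this
  -- conclude by connectivity
  have hall : ∀ a b : V, G.Reachable a b → G.degree a = G.degree b := by
    intro a b h
    obtain ⟨p⟩ := h
    induction p with
    | nil => rfl
    | cons h _ ih => exact (hadjdeg _ _ h).trans ih
  exact ⟨G.degree x₀, fun v => hall v x₀ (hconn v x₀)⟩
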